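/- Let 0 < s < 1, K > 1, and x, y ≥ 0 with |x - y| ≤ x/K. Then |⟨x⟩^s - ⟨y⟩^s| ≤ (s/(K-1)^(1-s))·⟨x - y⟩^s, where ⟨x⟩ = (1 + x²)^(1/2). -/

import Mathlib

/-- Japanese bracket. -/
noncomputable def jb (x : ℝ) : ℝ := Real.sqrt (1 + x ^ 2)

lemma jb_one_le (t : ℝ) : 1 ≤ jb t := by
  have h := Real.sqrt_le_sqrt (show (1:ℝ) ≤ 1 + t ^ 2 by nlinarith [sq_nonneg t])
  simpa [jb] using h

lemma jb_pos (t : ℝ) : 0 < jb t := lt_of_lt_of_le one_pos (jb_one_le t)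

lemma le_jb (t : ℝ) (ht : 0 ≤ t) : t ≤ jb t := by
  have h := Real.sqrt_le_sqrt (show t ^ 2 ≤ 1 + t ^ 2 by nlinarith)
  rwa [Real.sqrt_sq ht] at h

lemma jb_sq (t : ℝ) : jb t ^ 2 = 1 + t ^ 2 := Real.sq_sqrt (by positivity)

lemma jb_mono {a b : ℝ} (hb : 0 ≤ b) (hba : b ≤ a) : jb b ≤ jb a :=
  Real.sqrt_le_sqrt (by nlinarith)

lemma jb_lip {a b : ℝ} (hb : 0 ≤ b) (hba : b ≤ a) : jb a - jb b ≤ a - b := by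
  have h1 : (jb a - jb b) * (jb a + jb b) = (a - b) * (a + b) := by
    have := jb_sq a; have := jb_sq b; nlinarith
  have h2 : (0:ℝ) < jb a + jb b := by linarith [jb_pos a, jb_pos b]
  have h3 : a + b ≤ jb a + jb b := by
    have := le_jb a (hb.trans hba); have := le_jb b hb; linarith
  nlinarith [mul_nonneg (sub_nonneg.2 hba) (sub_nonneg.2 h3)]

/-- Concavity tangent bound. -/
lemma rpow_sub_rpow_le {s a b : ℝ} (hs0 : 0 ≤ s) (hs1 : s ≤ 1) (hb : 0 < b)
    (hba : b ≤ a) : a ^ s - b ^ s ≤ s * b ^ (s - 1) * (a - b) := by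
  have ha : 0 < a := hb.trans_le hba
  have h1 : (a / b) ^ s ≤ 1 + s * (a / b - 1) := by
    have := rpow_one_add_le_one_add_mul_self (s := a / b - 1)
      (by have h0 : 0 ≤ a / b := by positivity
          linarith) hs0 hs1
    simpa using this
  have h2 : (a / b) ^ s = a ^ s / b ^ s := Real.div_rpow ha.le hb.le s
  have hbs : 0 < b ^ s := Real.rpow_pos_of_pos hb s
  rw [h2, div_le_iff₀ hbs] at h1
  have h3 : b ^ (s - 1) = b ^ s / b := Real.rpow_sub_one (ne_of_gt hb) s
  have hcalc : a ^ s ≤ b ^ s + s * b ^ (s - 1) * (a - b) := by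
    refine h1.trans_eq ?_
    rw [h3]; field_simp
  linarith

lemma key (s K a b : ℝ) (hs0 : 0 < s) (hs1 : s < 1) (hK : 1 < K)
    (hb : 0 ≤ b) (hba : b ≤ a) (hm : (K - 1) * (a - b) ≤ b) :
    jb a ^ s - jb b ^ s ≤ (s / (K - 1) ^ (1 - s)) * jb (a - b) ^ s := by
  have hK1 : (0:ℝ) < K - 1 := by linarith
  have hd0 : 0 ≤ a - b := sub_nonneg.2 hba
  have hrhs0 : 0 ≤ s / (K - 1) ^ (1 - s) := by positivity
  rcases eq_or_lt_of_le hd0 with h | h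
  · have hab : a = b := by linarith
    rw [hab, sub_self]
    exact mul_nonneg hrhs0 (Real.rpow_nonneg (jb_pos _).le s)
  · set d := a - b with hd
    have hbpos : 0 < b := lt_of_lt_of_le (by positivity) hm
    have h1 : jb a ^ s - jb b ^ s ≤ s * jb b ^ (s - 1) * (jb a - jb b) :=
      rpow_sub_rpow_le hs0.le hs1.le (jb_pos b) (jb_mono hb hba)
    have h2 : jb a - jb b ≤ d := jb_lip hb hba
    have h3 : jb b ^ (s - 1) ≤ ((K - 1) * d) ^ (s - 1) := by
      apply Real.rpow_le_rpow_of_nonpos (by positivity) _ (by linarith)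
      exact le_trans hm (le_jb b hb)
    have h4 : ((K - 1) * d) ^ (s - 1) = (K - 1) ^ (s - 1) * d ^ (s - 1) :=
      Real.mul_rpow hK1.le hd0
    have h5 : (K - 1) ^ (s - 1) = 1 / (K - 1) ^ (1 - s) := by
      rw [show s - 1 = -(1 - s) by ring, Real.rpow_neg hK1.le, one_div]
    have h6 : d ^ (s - 1) * d = d ^ s := by
      rw [Real.rpow_sub_one (ne_of_gt h) s]
      field_simp
    have h7 : d ^ s ≤ jb d ^ s :=
      Real.rpow_le_rpow hd0 (le_jb d hd0) hs0.le
    calc jb a ^ s - jb b ^ s ≤ s * jb b ^ (s - 1) * (jb a - jb b) := h1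
      _ ≤ s * (((K - 1) * d) ^ (s - 1)) * d := by
          have hgap : 0 ≤ jb a - jb b := sub_nonneg.2 (jb_mono hb hba)
          have hq : 0 ≤ s * (((K - 1) * d) ^ (s - 1)) := by positivity
          exact mul_le_mul (mul_le_mul_of_nonneg_left h3 hs0.le) h2 hgap hq
      _ = (s / (K - 1) ^ (1 - s)) * d ^ s := by
          rw [h4, h5, ← h6]; ring
      _ ≤ (s / (K - 1) ^ (1 - s)) * jb d ^ s := mul_le_mul_of_nonneg_left h7 hrhs0

theorem stmt_6 (s K x y : ℝ) (hs0 : 0 < s) (hs1 : s < 1) (hK : 1 < K)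
    (hx : 0 ≤ x) (hy : 0 ≤ y) (hxy : |x - y| ≤ x / K) :
    |jb x ^ s - jb y ^ s| ≤ (s / (K - 1) ^ (1 - s)) * jb (x - y) ^ s := by
  have hK0 : (0:ℝ) < K := by linarith
  rcases le_total y x with h | h
  · have habs : (x - y) * K ≤ x := by
      rw [← le_div_iff₀ hK0]
      rwa [abs_of_nonneg (by linarith)] at hxy
    have hm : (K - 1) * (x - y) ≤ y := by nlinarith
    have hkey := key s K x y hs0 hs1 hK hy h hm
    rw [abs_of_nonneg]
    · exact hkey
    · have := Real.rpow_le_rpow (jb_pos y).le (jb_mono hy h) hs0.le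
      linarith
  · have habs : (y - x) * K ≤ x := by
      rw [← le_div_iff₀ hK0]
      rwa [abs_of_nonpos (by linarith), neg_sub] at hxy
    have hm : (K - 1) * (y - x) ≤ x := by nlinarith
    have hkey := key s K y x hs0 hs1 hK hx h hm
    have hsym : jb (y - x) = jb (x - y) := by
      rw [jb, jb]; ring_nf
    rw [abs_sub_comm, abs_of_nonneg]
    · rw [← hsym]; exact hkey
    · have := Real.rpow_le_rpow (jb_pos x).le (jb_mono hx h) hs0.le
      linarith
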